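/- Let p be a distribution over the integers that is log-concave and non-decreasing on [1,b], extended by p(i)=0 for i ≤ 0. Let I = [a,b] with p(I) = τ and J = [1,a−1] with p(J) = σ > 0. Then p(b)/p(a) ≤ 1 + τ/σ. -/

import Mathlib

/-- for a non-decreasing log-concave distribution on [1,b] (extended by 0
to non-positive integers), with I = [a,b] of mass τ and J = [1,a−1] of mass σ > 0,
one has p(b)/p(a) ≤ 1 + τ/σ. -/
theorem logconcave_ratio_bound (a b : ℤ) (p : ℤ → ℝ)
    (h1a : 1 ≤ a) (hab : a ≤ b)
    (hp0 : ∀ i, 0 ≤ p i)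
    (hzero : ∀ i ≤ (0 : ℤ), p i = 0)
    (hmono : ∀ i, 1 ≤ i → i < b → p i ≤ p (i + 1))
    (hlc : ∀ k ≤ b, p (k - 1) * p (k + 1) ≤ p k ^ 2)
    (hσ : 0 < ∑ i ∈ Finset.Icc 1 (a - 1), p i) :
    p b / p a ≤ 1 + (∑ i ∈ Finset.Icc a b, p i) / (∑ i ∈ Finset.Icc 1 (a - 1), p i) := by
  -- monotonicity on [1,b]
  have mono2 : ∀ i j : ℤ, 1 ≤ i → i ≤ j → j ≤ b → p i ≤ p j := by
    intro i j hi hij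
    refine Int.le_induction (motive := fun j _ => j ≤ b → p i ≤ p j) ?_ ?_ j hij
    · intro _; exact le_refl _
    · intro n hn ih hb
      exact le_trans (ih (by omega)) (hmono n (by omega) (by omega))
  -- cross inequality (ratios non-increasing)
  have cross : ∀ x k : ℤ, 1 ≤ x → x ≤ k → k + 1 ≤ b →
      p x * p (k + 1) ≤ p (x + 1) * p k := by
    intro x k hx hxk
    refine Int.le_induction (motive := fun k _ => k + 1 ≤ b → p x * p (k + 1) ≤ p (x + 1) * p k) ?_ ?_ k hxk
    · intro _; rw [mul_comm]
    · intro n hn ih hb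
      have hlcn := hlc (n + 1) (by omega)
      have e1 : n + 1 - 1 = n := by ring
      rw [e1] at hlcn
      rcases (hp0 (n + 1)).eq_or_lt with h0 | h0
      · have hx0 : p x = 0 :=
          le_antisymm (by rw [h0]; exact mono2 x (n+1) hx (by omega) (by omega)) (hp0 x)
        rw [hx0, zero_mul]
        exact mul_nonneg (hp0 _) (hp0 _)
      · have h1 := mul_le_mul_of_nonneg_right (ih (by omega)) (hp0 (n + 1 + 1))
        nlinarith [hp0 x, hp0 (x+1), hp0 n, hp0 (n+1+1)]
  -- chain: p (a - d) * p b ≤ p a * p (b - d)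
  have chain : ∀ d : ℤ, 0 ≤ d → d ≤ a - 1 → p (a - d) * p b ≤ p a * p (b - d) := by
    intro d hd
    refine Int.le_induction (motive := fun d _ => d ≤ a - 1 → p (a - d) * p b ≤ p a * p (b - d)) ?_ ?_ d hd
    · intro _; simp
    · intro n hn ih hda
      have hc := cross (a - n - 1) (b - n - 1) (by omega) (by omega) (by omega)
      have e1 : b - n - 1 + 1 = b - n := by ring
      have e2 : a - n - 1 + 1 = a - n := by ring
      rw [e1, e2] at hc
      have ihn := ih (by omega)
      have e3 : a - (n + 1) = a - n - 1 := by ring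
      have e4 : b - (n + 1) = b - n - 1 := by ring
      rw [e3, e4]
      rcases (hp0 (b - n)).eq_or_lt with h0 | h0
      · have hx0 : p (a - n - 1) = 0 :=
          le_antisymm (by rw [h0]; exact mono2 (a - n - 1) (b - n) (by omega) (by omega) (by omega)) (hp0 _)
        rw [hx0, zero_mul]
        exact mul_nonneg (hp0 _) (hp0 _)
      · nlinarith [mul_le_mul_of_nonneg_right hc (hp0 b),
          mul_le_mul_of_nonneg_right ihn (hp0 (b - n - 1)), hp0 (a - n - 1), hp0 b]
  set σ := ∑ i ∈ Finset.Icc 1 (a - 1), p i with hσdef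
  set τ := ∑ i ∈ Finset.Icc a b, p i with hτdef
  -- p a > 0
  have hpa : 0 < p a := by
    by_contra h
    push_neg at h
    have hpa0 : p a = 0 := le_antisymm h (hp0 a)
    have : σ ≤ 0 := by
      rw [hσdef]
      apply Finset.sum_nonpos
      intro j hj
      simp only [Finset.mem_Icc] at hj
      rw [← hpa0]
      exact mono2 j a hj.1 (by omega) hab
    linarith
  -- key inequality: σ * p b ≤ p a * (σ + τ)
  have hsum : σ + τ = ∑ i ∈ Finset.Icc 1 b, p i := by
    rw [hσdef, hτdef, ← Finset.sum_union]
    · congr 1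
      ext i
      simp only [Finset.mem_union, Finset.mem_Icc]
      omega
    · rw [Finset.disjoint_left]
      intro i hi hi2
      simp only [Finset.mem_Icc] at hi hi2
      omega
  have step1 : σ * p b ≤ p a * ∑ j ∈ Finset.Icc 1 (a - 1), p (b - a + j) := by
    rw [hσdef, Finset.sum_mul, Finset.mul_sum]
    apply Finset.sum_le_sum
    intro j hj
    simp only [Finset.mem_Icc] at hj
    have := chain (a - j) (by omega) (by omega)
    have e1 : a - (a - j) = j := by ring
    have e2 : b - (a - j) = b - a + j := by ring
    rw [e1, e2] at this
    exact this
  have step2 : ∑ j ∈ Finset.Icc 1 (a - 1), p (b - a + j) ≤ ∑ i ∈ Finset.Icc 1 b, p i := by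
    have himg : ∑ j ∈ Finset.Icc 1 (a - 1), p (b - a + j)
        = ∑ i ∈ Finset.Icc (b - a + 1) (b - a + (a - 1)), p i := by
      rw [← Finset.map_add_left_Icc]
      rw [Finset.sum_map]
      rfl
    rw [himg]
    apply Finset.sum_le_sum_of_subset_of_nonneg
    · intro i hi
      simp only [Finset.mem_Icc] at hi ⊢
      omega
    · intro i _ _
      exact hp0 i
  have key : σ * p b ≤ p a * (σ + τ) := by
    rw [hsum]
    calc σ * p b ≤ p a * ∑ j ∈ Finset.Icc 1 (a - 1), p (b - a + j) := step1
      _ ≤ p a * ∑ i ∈ Finset.Icc 1 b, p i := by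
          exact mul_le_mul_of_nonneg_left step2 (hp0 a)
  rw [div_le_iff₀ hpa]
  have heq : (1 + τ / σ) * p a = p a * (σ + τ) / σ := by
    field_simp
  rw [heq, le_div_iff₀ hσ]
  nlinarith [key]
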